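/- Let X be a finite type (of genres) and α a type (of items). Let p : X → ℝ be a nonnegative target genre distribution, let q : α → X → ℝ assign to each item a nonnegative weight per genre, and let w : ℕ → ℝ be an antitone sequence of nonnegative rank weights. Then the squared-Hellinger-based overlap sequence function F defined on a list S = s₁ … s_k of items by F(S) = Σ_{x ∈ X} sqrt( p(x) · Σ_{i=1}^{k} w(i)·q(s_i, x) ) is ordered-submodular. -/

import Mathlib

/-- A sequence function `f : List α → ℝ` is **ordered-submodular** if for all lists
`A, B` and elements `s, s̄`:
`f(A ++ [s]) − f(A) ≥ f(A ++ [s] ++ B) − f(A ++ [s̄] ++ B)`. -/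
def OrderedSubmodular {α : Type*} (f : List α → ℝ) : Prop :=
  ∀ (A B : List α) (s sbar : α),
    f (A ++ [s] ++ B) - f (A ++ [sbar] ++ B) ≤ f (A ++ [s]) - f A

private lemma sqrt_key (u c c' T : ℝ) (hu : 0 ≤ u) (hc : 0 ≤ c) (hc' : 0 ≤ c')
    (hT : 0 ≤ T) :
    Real.sqrt (u + c + T) - Real.sqrt (u + c' + T) ≤ Real.sqrt (u + c) - Real.sqrt u := by
  have h1 : Real.sqrt (u + T) ≤ Real.sqrt (u + c' + T) := Real.sqrt_le_sqrt (by linarith)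
  have h2 : Real.sqrt (u + c + T) + Real.sqrt u ≤ Real.sqrt (u + c) + Real.sqrt (u + T) := by
    have hbd : Real.sqrt u * Real.sqrt (u + c + T) ≤
        Real.sqrt (u + c) * Real.sqrt (u + T) := by
      rw [← Real.sqrt_mul hu, ← Real.sqrt_mul (by linarith)]
      exact Real.sqrt_le_sqrt (by nlinarith)
    nlinarith [Real.sq_sqrt hu, Real.sq_sqrt (show (0:ℝ) ≤ u + c by linarith),
      Real.sq_sqrt (show (0:ℝ) ≤ u + T by linarith),
      Real.sq_sqrt (show (0:ℝ) ≤ u + c + T by linarith),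
      Real.sqrt_nonneg u, Real.sqrt_nonneg (u + c), Real.sqrt_nonneg (u + T),
      Real.sqrt_nonneg (u + c + T)]
  linarith

/-- the squared-Hellinger-based overlap objective
`F(S) = Σ_{x ∈ X} sqrt(p(x) · Σ_{i=1}^{k} w(i) · q(s_i, x))`
is ordered-submodular, for a nonnegative target distribution `p`, nonnegative
item-genre weights `q`, and antitone nonnegative rank weights `w`.  The inner
sum over ranks is expressed via `List.enum` (rank `i`, 1-indexed, gets weight `w i`). -/
theorem hellinger_overlap_orderedSubmodular {X : Type*} [Fintype X] {α : Type*}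
    (p : X → ℝ) (hp : ∀ x, 0 ≤ p x)
    (q : α → X → ℝ) (hq : ∀ i x, 0 ≤ q i x)
    (w : ℕ → ℝ) (hw_anti : ∀ i j : ℕ, i ≤ j → w j ≤ w i)
    (hw_nonneg : ∀ i, 0 ≤ w i) :
    OrderedSubmodular (fun S : List α =>
      ∑ x : X,
        Real.sqrt (p x * (S.zipIdx.map (fun pr => w (pr.2 + 1) * q pr.1 x)).sum)) := by
  intro A B s sbar
  simp only
  set V : ℕ → List α → X → ℝ := fun n S x =>
    ((S.zipIdx n).map (fun pr => w (pr.2 + 1) * q pr.1 x)).sum with hV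
  have hVnonneg : ∀ n S x, 0 ≤ V n S x := by
    intro n S x
    apply List.sum_nonneg
    intro y hy
    obtain ⟨pr, _, rfl⟩ := List.mem_map.mp hy
    exact mul_nonneg (hw_nonneg _) (hq _ _)
  have hVapp : ∀ n (S T : List α) x, V n (S ++ T) x = V n S x + V (n + S.length) T x := by
    intro n S T x
    simp [hV, List.zipIdx_append]
  have henum : ∀ (S : List α) (x : X),
      (S.zipIdx.map (fun pr => w (pr.2 + 1) * q pr.1 x)).sum = V 0 S x := by
    intro S x; simp [hV]
  have key : ∀ x : X,
      Real.sqrt (p x * V 0 (A ++ [s] ++ B) x) - Real.sqrt (p x * V 0 (A ++ [sbar] ++ B) x)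
        ≤ Real.sqrt (p x * V 0 (A ++ [s]) x) - Real.sqrt (p x * V 0 A x) := by
    intro x
    have hs : ∀ t : α, V A.length [t] x = w (A.length + 1) * q t x := by
      intro t; simp [hV]
    rw [hVapp 0 (A ++ [s]) B, hVapp 0 (A ++ [sbar]) B, hVapp 0 A [s], hVapp 0 A [sbar]]
    simp only [zero_add, hs, List.length_append, List.length_singleton]
    simp only [mul_add]
    exact sqrt_key (p x * V 0 A x) (p x * (w (A.length + 1) * q s x))
      (p x * (w (A.length + 1) * q sbar x)) (p x * V (A.length + 1) B x)
      (mul_nonneg (hp x) (hVnonneg _ _ _))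
      (mul_nonneg (hp x) (mul_nonneg (hw_nonneg _) (hq _ _)))
      (mul_nonneg (hp x) (mul_nonneg (hw_nonneg _) (hq _ _)))
      (mul_nonneg (hp x) (hVnonneg _ _ _))
  simp only [henum]
  rw [← Finset.sum_sub_distrib, ← Finset.sum_sub_distrib]
  exact Finset.sum_le_sum fun x _ => key x
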